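/- Let Q be an N×N complex Hermitian positive semidefinite matrix with trace(Q) ≤ P, let H be a K×N complex matrix with trace(HᴴH) ≤ T, and let D be a K×K complex Hermitian positive semidefinite matrix. Then for every index i (1 ≤ i ≤ K), the i-th largest eigenvalue of H·Q·Hᴴ + D satisfies λ_i(H·Q·Hᴴ + D) ≤ T·P + λ_i(D), where eigenvalues are listed in decreasing order. -/

import Mathlib

open Matrix ComplexOrder

local notation "⟪" x ", " y "⟫" => @inner ℂ _ _ x y

section aux

variable {n : ℕ}

/-- Expand a dot product along an orthonormal basis (Parseval). -/
lemma dot_expand (b : OrthonormalBasis (Fin n) ℂ (EuclideanSpace ℂ (Fin n)))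
    (x y : EuclideanSpace ℂ (Fin n)) :
    star (x : Fin n → ℂ) ⬝ᵥ (y : Fin n → ℂ) =
      ∑ j, (starRingEnd ℂ) ⟪b j, x⟫ * ⟪b j, y⟫ := by
  have h0 : star (x : Fin n → ℂ) ⬝ᵥ (y : Fin n → ℂ) = ⟪x, y⟫ :=
    ((EuclideanSpace.inner_eq_star_dotProduct _ _).trans (dotProduct_comm _ _)).symm
  have h : ⟪x, y⟫ = ⟪b.repr x, b.repr y⟫ := (b.repr.inner_map_map x y).symm
  rw [h0, h]
  simp only [PiLp.inner_apply, RCLike.inner_apply, OrthonormalBasis.repr_apply_apply]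
  exact Finset.sum_congr rfl fun _ _ => mul_comm _ _

lemma inner_mulVec_eig {A : Matrix (Fin n) (Fin n) ℂ} (hA : A.IsHermitian)
    (x : EuclideanSpace ℂ (Fin n)) (j : Fin n) :
    ⟪hA.eigenvectorBasis j, (WithLp.toLp 2 (A *ᵥ x : Fin n → ℂ) : EuclideanSpace ℂ (Fin n))⟫ =
      (hA.eigenvalues j : ℂ) * ⟪hA.eigenvectorBasis j, x⟫ := by
  have h1 : star ⇑(hA.eigenvectorBasis j) ᵥ* A = star (A *ᵥ ⇑(hA.eigenvectorBasis j)) := by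
    rw [star_mulVec, hA.eq]
  calc ⟪hA.eigenvectorBasis j, (WithLp.toLp 2 (A *ᵥ x : Fin n → ℂ) : EuclideanSpace ℂ (Fin n))⟫
      = star ⇑(hA.eigenvectorBasis j) ⬝ᵥ (A *ᵥ x) :=
        (EuclideanSpace.inner_eq_star_dotProduct _ _).trans (dotProduct_comm _ _)
    _ = (star ⇑(hA.eigenvectorBasis j) ᵥ* A) ⬝ᵥ x := (dotProduct_mulVec _ _ _)
    _ = star (A *ᵥ ⇑(hA.eigenvectorBasis j)) ⬝ᵥ x := by rw [h1]
    _ = star ((hA.eigenvalues j) • ⇑(hA.eigenvectorBasis j)) ⬝ᵥ x := by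
        rw [hA.mulVec_eigenvectorBasis]
    _ = (hA.eigenvalues j : ℂ) * (star ⇑(hA.eigenvectorBasis j) ⬝ᵥ x) := by
        simp [star_smul, smul_dotProduct, Complex.real_smul]
    _ = (hA.eigenvalues j : ℂ) * ⟪hA.eigenvectorBasis j, x⟫ :=
        congrArg _ ((EuclideanSpace.inner_eq_star_dotProduct _ _).trans (dotProduct_comm _ _)).symm

end aux

section aux2

variable {n : ℕ}

lemma trace_re_eq {A : Matrix (Fin n) (Fin n) ℂ} (hA : A.IsHermitian) :
    A.trace.re = ∑ j, hA.eigenvalues j := by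
  have h : A.trace = (Matrix.diagonal (RCLike.ofReal ∘ hA.eigenvalues) : Matrix (Fin n) (Fin n) ℂ).trace := by
    conv_lhs => rw [hA.spectral_theorem]
    rw [Unitary.conjStarAlgAut_apply, Matrix.trace_mul_cycle]
    rw [Matrix.mem_unitaryGroup_iff'.mp (hA.eigenvectorUnitary).2, Matrix.one_mul]
  rw [h, Matrix.trace_diagonal]
  simp

lemma quad_re_eq {A : Matrix (Fin n) (Fin n) ℂ} (hA : A.IsHermitian)
    (x : EuclideanSpace ℂ (Fin n)) :
    (star (x : Fin n → ℂ) ⬝ᵥ (A *ᵥ x)).re =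
      ∑ j, hA.eigenvalues j * Complex.normSq ⟪hA.eigenvectorBasis j, x⟫ := by
  have h := dot_expand hA.eigenvectorBasis x (WithLp.toLp 2 (A *ᵥ x : Fin n → ℂ) : EuclideanSpace ℂ (Fin n))
  rw [h]
  rw [Complex.re_sum]
  refine Finset.sum_congr rfl fun j _ => ?_
  rw [inner_mulVec_eig hA x j]
  have : (starRingEnd ℂ) ⟪hA.eigenvectorBasis j, x⟫ *
      ((hA.eigenvalues j : ℂ) * ⟪hA.eigenvectorBasis j, x⟫)
      = (hA.eigenvalues j : ℂ) * (Complex.normSq ⟪hA.eigenvectorBasis j, x⟫ : ℂ) := by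
    rw [Complex.normSq_eq_conj_mul_self]; ring
  rw [this]
  simp [← Complex.ofReal_mul]

lemma nrm_re_eq (b : OrthonormalBasis (Fin n) ℂ (EuclideanSpace ℂ (Fin n)))
    (x : EuclideanSpace ℂ (Fin n)) :
    (star (x : Fin n → ℂ) ⬝ᵥ (x : Fin n → ℂ)).re = ∑ j, Complex.normSq ⟪b j, x⟫ := by
  rw [dot_expand b x x, Complex.re_sum]
  refine Finset.sum_congr rfl fun j _ => ?_
  rw [← Complex.normSq_eq_conj_mul_self]
  simp

lemma nrm_nonneg (x : Fin n → ℂ) : 0 ≤ (star x ⬝ᵥ x).re := by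
  rw [dotProduct, Complex.re_sum]
  refine Finset.sum_nonneg fun j _ => ?_
  simpa [Pi.star_apply, ← Complex.normSq_eq_conj_mul_self] using Complex.normSq_nonneg (x j)

lemma nrm_pos {x : Fin n → ℂ} (hx : x ≠ 0) : 0 < (star x ⬝ᵥ x).re := by
  obtain ⟨i, hi⟩ := Function.ne_iff.mp hx
  rw [dotProduct, Complex.re_sum]
  refine Finset.sum_pos' (fun j _ => ?_) ⟨i, Finset.mem_univ i, ?_⟩
  · simpa [Pi.star_apply, ← Complex.normSq_eq_conj_mul_self] using Complex.normSq_nonneg (x j)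
  · simp only [Pi.star_apply, Complex.star_def, ← Complex.normSq_eq_conj_mul_self,
      Complex.ofReal_re]
    exact Complex.normSq_pos.mpr (by simpa using hi)

/-- PSD quadratic form is bounded by the trace times the squared norm. -/
lemma quad_le_trace {A : Matrix (Fin n) (Fin n) ℂ} (hA : A.PosSemidef)
    (x : EuclideanSpace ℂ (Fin n)) :
    (star (x : Fin n → ℂ) ⬝ᵥ (A *ᵥ x)).re ≤ A.trace.re * (star (x : Fin n → ℂ) ⬝ᵥ x).re := by
  rw [quad_re_eq hA.isHermitian x, nrm_re_eq hA.isHermitian.eigenvectorBasis x,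
    trace_re_eq hA.isHermitian, Finset.sum_mul]
  refine Finset.sum_le_sum fun j _ => ?_
  refine mul_le_mul_of_nonneg_left ?_ (hA.eigenvalues_nonneg j)
  exact Finset.single_le_sum (f := fun k => Complex.normSq ⟪hA.isHermitian.eigenvectorBasis k, x⟫)
    (fun k _ => Complex.normSq_nonneg _) (Finset.mem_univ j)

lemma coeff_eq_zero (b : OrthonormalBasis (Fin n) ℂ (EuclideanSpace ℂ (Fin n)))
    {s : Set (Fin n)} {x : EuclideanSpace ℂ (Fin n)}
    (hx : x ∈ Submodule.span ℂ (⇑b '' s)) {j : Fin n} (hj : j ∉ s) :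
    ⟪b j, x⟫ = 0 := by
  induction hx using Submodule.span_induction with
  | mem y hy =>
    obtain ⟨k, hk, rfl⟩ := hy
    exact b.orthonormal.2 (fun h : j = k => hj (h ▸ hk))
  | zero => exact inner_zero_right _
  | add y z _ _ hy hz => rw [inner_add_right, hy, hz, add_zero]
  | smul c y _ hy => rw [inner_smul_right, hy, mul_zero]

lemma quad_le_of_span {A : Matrix (Fin n) (Fin n) ℂ} (hA : A.IsHermitian)
    {s : Set (Fin n)} {a : ℝ} (hs : ∀ j ∈ s, hA.eigenvalues j ≤ a)
    {x : EuclideanSpace ℂ (Fin n)}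
    (hx : x ∈ Submodule.span ℂ (⇑hA.eigenvectorBasis '' s)) :
    (star (x : Fin n → ℂ) ⬝ᵥ (A *ᵥ x)).re ≤ a * (star (x : Fin n → ℂ) ⬝ᵥ x).re := by
  rw [quad_re_eq hA x, nrm_re_eq hA.eigenvectorBasis x, Finset.mul_sum]
  refine Finset.sum_le_sum fun j _ => ?_
  by_cases hj : j ∈ s
  · exact mul_le_mul_of_nonneg_right (hs j hj) (Complex.normSq_nonneg _)
  · rw [coeff_eq_zero hA.eigenvectorBasis hx hj]
    simp

lemma le_quad_of_span {A : Matrix (Fin n) (Fin n) ℂ} (hA : A.IsHermitian)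
    {s : Set (Fin n)} {a : ℝ} (hs : ∀ j ∈ s, a ≤ hA.eigenvalues j)
    {x : EuclideanSpace ℂ (Fin n)}
    (hx : x ∈ Submodule.span ℂ (⇑hA.eigenvectorBasis '' s)) :
    a * (star (x : Fin n → ℂ) ⬝ᵥ x).re ≤ (star (x : Fin n → ℂ) ⬝ᵥ (A *ᵥ x)).re := by
  rw [quad_re_eq hA x, nrm_re_eq hA.eigenvectorBasis x, Finset.mul_sum]
  refine Finset.sum_le_sum fun j _ => ?_
  by_cases hj : j ∈ s
  · exact mul_le_mul_of_nonneg_right (hs j hj) (Complex.normSq_nonneg _)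
  · rw [coeff_eq_zero hA.eigenvectorBasis hx hj]
    simp

lemma finrank_span_onb (b : OrthonormalBasis (Fin n) ℂ (EuclideanSpace ℂ (Fin n)))
    (t : Finset (Fin n)) :
    Module.finrank ℂ (Submodule.span ℂ (⇑b '' ↑t)) = t.card := by
  have li : LinearIndependent ℂ (fun x : (↑t : Set (Fin n)) => b ↑x) :=
    b.orthonormal.linearIndependent.comp _ Subtype.val_injective
  rw [Set.image_eq_range, finrank_span_eq_card li]
  simpa using Fintype.card_coe t

end aux2

/-- For `Q` PSD with `trace(Q) ≤ P`, `H` with `trace(HᴴH) ≤ T`, and `D` PSD, the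
decreasingly-ordered eigenvalues satisfy `λ_i(H Q Hᴴ + D) ≤ T·P + λ_i(D)`. -/
theorem eigenvalue_perturbation_bound (N K : ℕ)
    (Q : Matrix (Fin N) (Fin N) ℂ) (hQ : Q.PosSemidef)
    (H : Matrix (Fin K) (Fin N) ℂ)
    (D : Matrix (Fin K) (Fin K) ℂ) (hD : D.PosSemidef)
    (T P : ℝ) (hT : 0 ≤ T) (hP : 0 ≤ P)
    (htrH : (Hᴴ * H).trace.re ≤ T) (htrQ : Q.trace.re ≤ P)
    (hS : (H * Q * Hᴴ + D).IsHermitian)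
    (μ ν : Fin K → ℝ) (hμ : Antitone μ) (hν : Antitone ν)
    (hμperm : ∃ e : Equiv.Perm (Fin K), μ = hS.eigenvalues ∘ e)
    (hνperm : ∃ e : Equiv.Perm (Fin K), ν = hD.isHermitian.eigenvalues ∘ e) :
    ∀ i, μ i ≤ T * P + ν i := by
  obtain ⟨e, he⟩ := hμperm
  obtain ⟨f, hf⟩ := hνperm
  intro i
  set bS := hS.eigenvectorBasis with hbS
  set bD := hD.isHermitian.eigenvectorBasis with hbD
  set t₁ : Finset (Fin K) := (Finset.Iic i).image e with ht₁
  set t₂ : Finset (Fin K) := (Finset.Ici i).image f with ht₂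
  set V := Submodule.span ℂ (⇑bS '' ↑t₁) with hVdef
  set W := Submodule.span ℂ (⇑bD '' ↑t₂) with hWdef
  have hVr : Module.finrank ℂ V = (i : ℕ) + 1 := by
    rw [hVdef, finrank_span_onb, ht₁, Finset.card_image_of_injective _ e.injective,
      Fin.card_Iic]
  have hWr : Module.finrank ℂ W = K - (i : ℕ) := by
    rw [hWdef, finrank_span_onb, ht₂, Finset.card_image_of_injective _ f.injective,
      Fin.card_Ici]
  have hiK : (i : ℕ) < K := i.2
  have hne : V ⊓ W ≠ ⊥ := by
    intro hbot
    have hsum := Submodule.finrank_sup_add_finrank_inf_eq V W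
    rw [hbot, finrank_bot, add_zero] at hsum
    have hle : Module.finrank ℂ ↥(V ⊔ W) ≤ K := by
      have := Submodule.finrank_le (V ⊔ W)
      rwa [finrank_euclideanSpace_fin] at this
    omega
  obtain ⟨x, hxmem, hx0⟩ := Submodule.exists_mem_ne_zero_of_ne_bot hne
  have hxV : x ∈ V := hxmem.1
  have hxW : x ∈ W := hxmem.2
  have hn : 0 < (star (x : Fin K → ℂ) ⬝ᵥ (x : Fin K → ℂ)).re := nrm_pos (by rwa [Ne, WithLp.ofLp_eq_zero])
  -- lower bound via S
  have hlow : μ i * (star (x : Fin K → ℂ) ⬝ᵥ (x : Fin K → ℂ)).re ≤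
      (star (x : Fin K → ℂ) ⬝ᵥ ((H * Q * Hᴴ + D) *ᵥ x)).re := by
    refine le_quad_of_span hS (s := ↑t₁) ?_ hxV
    intro j hj
    obtain ⟨k, hk, rfl⟩ := Finset.mem_image.mp (Finset.mem_coe.mp hj)
    have : hS.eigenvalues (e k) = μ k := by rw [he]; rfl
    rw [this]
    exact hμ (Finset.mem_Iic.mp hk)
  -- upper bound for D part
  have hDup : (star (x : Fin K → ℂ) ⬝ᵥ (D *ᵥ x)).re ≤
      ν i * (star (x : Fin K → ℂ) ⬝ᵥ (x : Fin K → ℂ)).re := by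
    refine quad_le_of_span hD.isHermitian (s := ↑t₂) ?_ hxW
    intro j hj
    obtain ⟨k, hk, rfl⟩ := Finset.mem_image.mp (Finset.mem_coe.mp hj)
    have : hD.isHermitian.eigenvalues (f k) = ν k := by rw [hf]; rfl
    rw [this]
    exact hν (Finset.mem_Ici.mp hk)
  -- upper bound for H Q Hᴴ part
  have hAup : (star (x : Fin K → ℂ) ⬝ᵥ ((H * Q * Hᴴ) *ᵥ x)).re ≤
      T * P * (star (x : Fin K → ℂ) ⬝ᵥ (x : Fin K → ℂ)).re := by
    have e1 : star (x : Fin K → ℂ) ⬝ᵥ ((H * Q * Hᴴ) *ᵥ x) =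
        star (Hᴴ *ᵥ (x : Fin K → ℂ)) ⬝ᵥ (Q *ᵥ (Hᴴ *ᵥ x)) := by
      simp [star_mulVec, ← mulVec_mulVec, dotProduct_mulVec]
    have e2 := quad_le_trace hQ (WithLp.toLp 2 (Hᴴ *ᵥ (x : Fin K → ℂ)) : EuclideanSpace ℂ (Fin N))
    have e3 : star (Hᴴ *ᵥ (x : Fin K → ℂ)) ⬝ᵥ (Hᴴ *ᵥ (x : Fin K → ℂ)) =
        star (x : Fin K → ℂ) ⬝ᵥ ((H * Hᴴ) *ᵥ x) := by
      simp [star_mulVec, ← mulVec_mulVec, dotProduct_mulVec]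
    have e4 := quad_le_trace (Matrix.posSemidef_self_mul_conjTranspose H) x
    have htr1 : (H * Hᴴ).trace.re ≤ T := by rw [Matrix.trace_mul_comm]; exact htrH
    have h0Q : 0 ≤ Q.trace.re := by
      rw [trace_re_eq hQ.isHermitian]
      exact Finset.sum_nonneg fun j _ => hQ.eigenvalues_nonneg j
    have h0H : 0 ≤ (H * Hᴴ).trace.re := by
      rw [trace_re_eq (Matrix.posSemidef_self_mul_conjTranspose H).isHermitian]
      exact Finset.sum_nonneg fun j _ =>
        (Matrix.posSemidef_self_mul_conjTranspose H).eigenvalues_nonneg j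
    have hy0 : 0 ≤ (star (Hᴴ *ᵥ (x : Fin K → ℂ)) ⬝ᵥ (Hᴴ *ᵥ (x : Fin K → ℂ))).re :=
      nrm_nonneg _
    have hx0' : 0 ≤ (star (x : Fin K → ℂ) ⬝ᵥ (x : Fin K → ℂ)).re := nrm_nonneg _
    rw [e1]
    calc (star (Hᴴ *ᵥ (x : Fin K → ℂ)) ⬝ᵥ (Q *ᵥ (Hᴴ *ᵥ x))).re
        ≤ Q.trace.re * (star (Hᴴ *ᵥ (x : Fin K → ℂ)) ⬝ᵥ (Hᴴ *ᵥ (x : Fin K → ℂ))).re := e2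
      _ ≤ Q.trace.re * ((H * Hᴴ).trace.re * (star (x : Fin K → ℂ) ⬝ᵥ (x : Fin K → ℂ)).re) := by
          rw [e3] at *; exact mul_le_mul_of_nonneg_left e4 h0Q
      _ ≤ P * (T * (star (x : Fin K → ℂ) ⬝ᵥ (x : Fin K → ℂ)).re) := by
          apply mul_le_mul htrQ (mul_le_mul_of_nonneg_right htr1 hx0') (by positivity) hP
      _ = T * P * (star (x : Fin K → ℂ) ⬝ᵥ (x : Fin K → ℂ)).re := by ring
  have hsplit : (star (x : Fin K → ℂ) ⬝ᵥ ((H * Q * Hᴴ + D) *ᵥ x)).re =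
      (star (x : Fin K → ℂ) ⬝ᵥ ((H * Q * Hᴴ) *ᵥ x)).re +
      (star (x : Fin K → ℂ) ⬝ᵥ (D *ᵥ x)).re := by
    rw [add_mulVec, dotProduct_add, Complex.add_re]
  have hfinal : μ i * (star (x : Fin K → ℂ) ⬝ᵥ (x : Fin K → ℂ)).re ≤
      (T * P + ν i) * (star (x : Fin K → ℂ) ⬝ᵥ (x : Fin K → ℂ)).re := by
    rw [add_mul]
    calc μ i * _ ≤ _ := hlow
      _ = _ + _ := hsplit
      _ ≤ _ := add_le_add hAup hDup
  exact le_of_mul_le_mul_right (by linarith [hfinal]) hn
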